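/- For every real linear subspace W ⊂ ℍ² of real dimension at most 4, there exists a quaternion λ ∈ ℍ such that the quaternionic line V_λ := {(x, xλ) : x ∈ ℍ} intersects W only in 0. -/

import Mathlib

open MeasureTheory Set

private lemma quat_smul_inv_mul (r : ℝ) (hr : r ≠ 0) (a b : Quaternion ℝ) :
    (r • a)⁻¹ * (r • b) = a⁻¹ * b := by
  rw [smul_inv₀, smul_mul_smul_comm, inv_mul_cancel₀ hr, one_smul]

set_option maxHeartbeats 1000000 in
/-- Lemma B.1: for every real subspace W of ℍ² of real
dimension at most 4 there is a quaternion λ such that the quaternionic line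
V_λ = {(x, xλ)} meets W only in 0. -/
theorem quaternionic_line_avoids_subspace
    (W : Submodule ℝ (Quaternion ℝ × Quaternion ℝ))
    (hW : Module.finrank ℝ W ≤ 4) :
    ∃ lam : Quaternion ℝ, ∀ x : Quaternion ℝ, (x, x * lam) ∈ W → x = 0 := by
  classical
  by_contra hcon
  push_neg at hcon
  -- Build a linear map `f : ℍ →ₗ[ℝ] ℍ × ℍ` whose range contains `W`.
  let b := Module.finBasis ℝ W
  let v : Fin 4 → W := fun i => if h : (i : ℕ) < Module.finrank ℝ W then b ⟨i, h⟩ else 0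
  let c : Module.Basis (Fin 4) ℝ (Quaternion ℝ) :=
    (Module.finBasis ℝ (Quaternion ℝ)).reindex (finCongr (Quaternion.finrank_eq_four (R := ℝ)))
  let f : Quaternion ℝ →ₗ[ℝ] Quaternion ℝ × Quaternion ℝ :=
    W.subtype.comp (c.constr ℝ v)
  have hrange : ∀ w ∈ W, ∃ q, f q = w := by
    intro w hw
    have hsur : LinearMap.range (c.constr ℝ v) = ⊤ := by
      rw [Module.Basis.constr_range, eq_top_iff]
      intro x _
      have hx : x ∈ Submodule.span ℝ (Set.range b) := by rw [b.span_eq]; trivial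
      refine Submodule.span_mono ?_ hx
      rintro y ⟨j, rfl⟩
      refine ⟨⟨(j : ℕ), lt_of_lt_of_le j.2 hW⟩, ?_⟩
      simp [v, j.2]
    obtain ⟨q, hq⟩ := LinearMap.range_eq_top.1 hsur ⟨w, hw⟩
    exact ⟨q, by simp [f, hq]⟩
  -- continuous linear version
  let F : Quaternion ℝ →L[ℝ] Quaternion ℝ × Quaternion ℝ := f.toContinuousLinearMap
  let g : Quaternion ℝ → Quaternion ℝ := fun q => ((F q).1)⁻¹ * (F q).2
  let O : Set (Quaternion ℝ) := {q | (F q).1 ≠ 0}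
  -- every quaternion is in the image
  have hcover : (univ : Set (Quaternion ℝ)) ⊆ g '' O := by
    intro lam _
    obtain ⟨x, hxW, hx⟩ := hcon lam
    obtain ⟨q, hq⟩ := hrange (x, x * lam) hxW
    have hq' : F q = (x, x * lam) := hq
    refine ⟨q, ?_, ?_⟩
    · show (F q).1 ≠ 0
      rw [hq']; exact hx
    · show ((F q).1)⁻¹ * (F q).2 = lam
      rw [hq']
      exact inv_mul_cancel_left₀ hx lam
  -- differentiability on O
  have hdiff : ∀ q ∈ O, DifferentiableAt ℝ g q := by
    intro q hq
    have h1 : DifferentiableAt ℝ (fun q => (F q).1) q :=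
      (F.differentiable.fst).differentiableAt
    have h2 : DifferentiableAt ℝ (fun q => (F q).2) q :=
      (F.differentiable.snd).differentiableAt
    have hinv : DifferentiableAt ℝ (fun q => ((F q).1)⁻¹) q :=
      (differentiableAt_inv hq).comp q h1
    exact hinv.mul h2
  -- the derivative kills the (nonzero) vector q, hence has vanishing determinant
  have hker : ∀ q ∈ O, fderiv ℝ g q q = 0 := by
    intro q hq
    have HG : HasFDerivAt g (fderiv ℝ g q) q := (hdiff q hq).hasFDerivAt
    have hc : HasDerivAt (fun t : ℝ => q + t • q) q 0 := by
      simpa using ((hasDerivAt_id (0 : ℝ)).smul_const q).const_add q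
    have hcomp : HasDerivAt (fun t : ℝ => g (q + t • q)) (fderiv ℝ g q q) 0 :=
      HasFDerivAt.comp_hasDerivAt (x := 0) (l := g) (l' := fderiv ℝ g q) (by simpa using HG) hc
    have hconst : HasDerivAt (fun t : ℝ => g (q + t • q)) 0 0 := by
      have heq : (fun t : ℝ => g (q + t • q)) =ᶠ[nhds (0 : ℝ)] fun _ => g q := by
        filter_upwards [Metric.ball_mem_nhds (0 : ℝ) one_pos] with t ht
        have h1t : (1 : ℝ) + t ≠ 0 := by
          have : |t| < 1 := by simpa [Real.dist_eq] using ht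
          cases abs_lt.1 this; intro h; linarith
        have : q + t • q = (1 + t) • q := by
          rw [add_smul, one_smul]
        rw [this]
        show ((F ((1 + t) • q)).1)⁻¹ * (F ((1 + t) • q)).2 = ((F q).1)⁻¹ * (F q).2
        rw [F.map_smul]
        have h1 : ((1 + t) • F q).1 = (1 + t) • (F q).1 := rfl
        have h2 : ((1 + t) • F q).2 = (1 + t) • (F q).2 := rfl
        rw [h1, h2, quat_smul_inv_mul (1 + t) h1t]
      exact (hasDerivAt_const (0 : ℝ) (g q)).congr_of_eventuallyEq heq
    exact hcomp.unique hconst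
  have hdet : ∀ q ∈ O, (fderiv ℝ g q).det = 0 := by
    intro q hq
    by_contra hne
    have hq0 : q ≠ 0 := by
      intro h
      apply hq
      simp [h, F, map_zero]
    let e := LinearMap.equivOfDetNeZero ((fderiv ℝ g q) : Quaternion ℝ →ₗ[ℝ] Quaternion ℝ) hne
    have h1 : e q = 0 := by
      rw [show e q = (fderiv ℝ g q) q from rfl, hker q hq]
    exact hq0 (by simpa using e.injective (h1.trans (map_zero e).symm))
  -- measure-theoretic conclusion
  borelize (Quaternion ℝ)
  set μ : Measure (Quaternion ℝ) := Measure.addHaar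
  have h0 : μ (g '' O) = 0 :=
    addHaar_image_eq_zero_of_det_fderivWithin_eq_zero μ
      (f' := fun q => fderiv ℝ g q)
      (fun q hq => ((hdiff q hq).hasFDerivAt).hasFDerivWithinAt)
      (fun q hq => hdet q hq)
  have huniv : μ (univ : Set (Quaternion ℝ)) = 0 :=
    le_antisymm (h0 ▸ measure_mono hcover) zero_le
  have hpos : 0 < μ (univ : Set (Quaternion ℝ)) :=
    IsOpen.measure_pos μ isOpen_univ ⟨0, mem_univ 0⟩
  rw [huniv] at hpos
  exact lt_irrefl 0 hpos
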